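/- Anti-rw is the only dependency relating a later-committed transaction to an earlier-committed one: if dep(t1, t2) holds and commit(t2) < commit(t1), then the dependency is an rw dependency, i.e. there is some (k, v) ∈ reads(t1) with k ∈ writes(t2) and v < commit(t2); it cannot be a ww or wr dependency. -/

import Mathlib

/-- A timestamp is a pair `(m, p)` of naturals, ordered lexicographically. -/
abbrev Timestamp : Type := ℕ ×ₗ ℕ

/-- A transaction: a start timestamp of the form `(m, 0)`, a commit timestamp
`(M, q)` with `q ≥ 1` and `start ≤ (M, 0)`, a finite read set of key/version
pairs with versions at most the start timestamp, and a finite write set of keys. -/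
structure Txn (Key : Type) where
  startTS : Timestamp
  commitTS : Timestamp
  start_snd : (ofLex startTS).2 = 0
  commit_pos : 1 ≤ (ofLex commitTS).2
  start_le : startTS ≤ toLex ((ofLex commitTS).1, 0)
  reads : Finset (Key × Timestamp)
  writes : Finset Key
  reads_snapshot : ∀ kv ∈ reads, kv.2 ≤ startTS

/-- Concurrency of two transactions with respect to a commit-timestamp assignment `C`. -/
def ConcurrentWith {Key : Type} (C : Txn Key → Timestamp) (t1 t2 : Txn Key) : Prop :=
  (C t1 < C t2 → t2.startTS < C t1) ∧ (C t2 < C t1 → t1.startTS < C t2)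

/-- Concurrency with respect to the original commit timestamps. -/
def Concurrent {Key : Type} (t1 t2 : Txn Key) : Prop :=
  ConcurrentWith (fun t => t.commitTS) t1 t2

/-- Write-write dependency `t1 →ww t2` w.r.t. commit assignment `C`. -/
def wwC {Key : Type} (C : Txn Key → Timestamp) (t1 t2 : Txn Key) : Prop :=
  t1 ≠ t2 ∧ (∃ k, k ∈ t1.writes ∧ k ∈ t2.writes) ∧ C t1 < C t2

/-- Write-read dependency `t1 →wr t2` w.r.t. commit assignment `C`. -/
def wrC {Key : Type} (C : Txn Key → Timestamp) (t1 t2 : Txn Key) : Prop :=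
  t1 ≠ t2 ∧ ∃ kv ∈ t2.reads, kv.1 ∈ t1.writes ∧ kv.2 = C t1

/-- Read-write dependency `t1 →rw t2` w.r.t. commit assignment `C`. -/
def rwC {Key : Type} (C : Txn Key → Timestamp) (t1 t2 : Txn Key) : Prop :=
  t1 ≠ t2 ∧ ∃ kv ∈ t1.reads, kv.1 ∈ t2.writes ∧ kv.2 < C t2

/-- The dependency relation: union of ww, wr and rw. -/
def depC {Key : Type} (C : Txn Key → Timestamp) (t1 t2 : Txn Key) : Prop :=
  wwC C t1 t2 ∨ wrC C t1 t2 ∨ rwC C t1 t2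

/-- `t` is committed with respect to the next block number `M`. -/
def Committed {Key : Type} (M : ℕ) (t : Txn Key) : Prop :=
  (ofLex t.commitTS).1 < M

/-- `t` is pending with respect to the next block number `M`:
its commit timestamp is `(M, p)` (with `p ≥ 1` automatic). -/
def Pending {Key : Type} (M : ℕ) (t : Txn Key) : Prop :=
  (ofLex t.commitTS).1 = M

/-- A reordering of the transactions in `T`: it assigns to each pending
transaction a new commit timestamp `(M, p')` with `p' ≥ 1`, injectively on `T`,
leaving committed transactions' commit timestamps (and, implicitly, all start
timestamps, read sets and write sets) unchanged. -/
structure Reordering {Key : Type} (M : ℕ) (T : Finset (Txn Key)) where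
  newCommit : Txn Key → Timestamp
  fix_committed : ∀ t ∈ T, Committed M t → newCommit t = t.commitTS
  pending_block : ∀ t ∈ T, Pending M t → (ofLex (newCommit t)).1 = M
  pending_pos : ∀ t ∈ T, Pending M t → 1 ≤ (ofLex (newCommit t)).2
  inj : ∀ t ∈ T, ∀ u ∈ T, newCommit t = newCommit u → t = u

/-- anti-rw is the only dependency relating a later-committed
transaction to an earlier-committed one: if `dep(t1, t2)` and
`commit(t2) < commit(t1)`, then the dependency is an rw dependency — some
`(k, v) ∈ reads(t1)` has `k ∈ writes(t2)` and `v < commit(t2)` — and it is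
neither a ww nor a wr dependency. -/
theorem antiRW_only_backward_dependency {Key : Type} (t1 t2 : Txn Key)
    (hdep : depC (fun t => t.commitTS) t1 t2)
    (hlt : t2.commitTS < t1.commitTS) :
    (∃ kv ∈ t1.reads, kv.1 ∈ t2.writes ∧ kv.2 < t2.commitTS) ∧
    rwC (fun t => t.commitTS) t1 t2 ∧
    ¬ wwC (fun t => t.commitTS) t1 t2 ∧
    ¬ wrC (fun t => t.commitTS) t1 t2 := by
  have hstart_lt : ∀ t : Txn Key, t.startTS < t.commitTS := by
    intro t
    refine lt_of_le_of_lt t.start_le ?_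
    conv_rhs => rw [← toLex_ofLex t.commitTS]
    exact Prod.Lex.lt_iff.mpr (Or.inr ⟨rfl, t.commit_pos⟩)
  have hnww : ¬ wwC (fun t => t.commitTS) t1 t2 := by
    rintro ⟨-, -, h⟩
    exact absurd hlt (not_lt.mpr h.le)
  have hnwr : ¬ wrC (fun t => t.commitTS) t1 t2 := by
    rintro ⟨-, kv, hkv, -, heq⟩
    have h1 := t2.reads_snapshot kv hkv
    have h2 := hstart_lt t2
    rw [heq] at h1
    exact lt_irrefl _ (h1.trans_lt (h2.trans hlt))
  have hrw : rwC (fun t => t.commitTS) t1 t2 := by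
    rcases hdep with h | h | h
    · exact absurd h hnww
    · exact absurd h hnwr
    · exact h
  exact ⟨hrw.2, hrw, hnww, hnwr⟩
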